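/- Let P be the set of nine points of concurrence (one for each of the nine distinguished submodules, namely the common duad of the three synthemes whose union is the submodule's trace D(x,y)) and let Λ be the set of six synthemes whose β-image is contained in three of the nine submodules. Then the nine points of P are pairwise distinct, each syntheme in Λ contains exactly 3 points of P, each point of P lies in exactly 2 synthemes of Λ, and any two distinct synthemes of Λ share at most one point of P; thus (P, Λ) is a 3×3 grid, a generalized quadrangle of type GQ(2,1), inside the doily. -/
import Mathlib


open Matrix

/-- The matrix m(a,b,c,d) = [[a,c,d],[0,b,0],[0,0,b]] over GF(2). -/
def m (a b c d : ZMod 2) : Matrix (Fin 3) (Fin 3) (ZMod 2) :=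
  !![a, c, d; 0, b, 0; 0, 0, b]

lemma m_mul (a b c d a' b' c' d' : ZMod 2) :
    m a b c d * m a' b' c' d' =
      m (a * a') (b * b') (a * c' + c * b') (a * d' + d * b') := by
  ext i j
  fin_cases i <;> fin_cases j <;>
    simp [m, Matrix.mul_apply, Fin.sum_univ_three, Matrix.vecHead, Matrix.vecTail]

/-- The ring R, as a subring of the 3×3 matrices over GF(2). -/
def Rring : Subring (Matrix (Fin 3) (Fin 3) (ZMod 2)) where
  carrier := {A | ∃ a b c d : ZMod 2, A = m a b c d}
  zero_mem' := ⟨0, 0, 0, 0, by ext i j; fin_cases i <;> fin_cases j <;> simp [m, Matrix.vecHead, Matrix.vecTail]⟩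
  one_mem' := ⟨1, 1, 0, 0, by ext i j; fin_cases i <;> fin_cases j <;> simp [m, Matrix.one_apply, Matrix.vecHead, Matrix.vecTail]⟩
  add_mem' := by
    rintro A B ⟨a, b, c, d, rfl⟩ ⟨a', b', c', d', rfl⟩
    exact ⟨a + a', b + b', c + c', d + d',
      by ext i j; fin_cases i <;> fin_cases j <;> simp [m, Matrix.vecHead, Matrix.vecTail]⟩
  neg_mem' := by
    rintro A ⟨a, b, c, d, rfl⟩
    exact ⟨-a, -b, -c, -d,
      by ext i j; fin_cases i <;> fin_cases j <;> simp [m, Matrix.vecHead, Matrix.vecTail]⟩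
  mul_mem' := by
    rintro A B ⟨a, b, c, d, rfl⟩ ⟨a', b', c', d', rfl⟩
    exact ⟨a * a', b * b', a * c' + c * b', a * d' + d * b', m_mul a b c d a' b' c' d'⟩

lemma m_mem (a b c d : ZMod 2) : m a b c d ∈ Rring := ⟨a, b, c, d, rfl⟩

/-- The element m(a,b,c,d) viewed as an element of the ring R. -/
def mm (a b c d : ZMod 2) : Rring := ⟨m a b c d, m_mem a b c d⟩

/-- The cyclic left submodule R(x,y) = {(αx, αy) : α ∈ R} of R², as a set of vectors. -/
def RM (x y : Rring) : Set (Rring × Rring) := {p | ∃ α : Rring, p = (α * x, α * y)}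

def t : Rring := mm 0 0 1 0
def f : Rring := mm 0 0 1 1
def s : Rring := mm 0 0 0 1
def e : Rring := mm 0 1 0 0
def u : Rring := mm 0 1 1 0
def v : Rring := mm 0 1 1 1
def w : Rring := mm 0 1 0 1

/-- The nine distinguished generators. -/
def gens : List (Rring × Rring) :=
  [(t, e), (f, e), (s, e), (e, u), (e, v), (e, w), (e, s), (e, f), (e, t)]

/-- A duad: a 2-element subset of the 6-element set. -/
def IsDuad (p : Finset (Fin 6)) : Prop := p.card = 2

/-- A syntheme: a set of three duads partitioning the 6-element set. -/
def IsSyntheme (L : Finset (Finset (Fin 6))) : Prop :=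
  L.card = 3 ∧ (∀ p ∈ L, IsDuad p) ∧ ∀ i : Fin 6, ∃! p, p ∈ L ∧ i ∈ p

/-- The bijection β from the 15 duads (2-subsets of Fin 6, with 0,…,5 standing for
1,…,6) to the 15 nonzero vectors of J × J. -/
def β (p : Finset (Fin 6)) : Rring × Rring :=
  if p = {0, 1} then (t, t)
  else if p = {0, 2} then (f, t)
  else if p = {0, 3} then (0, s)
  else if p = {0, 4} then (t, s)
  else if p = {0, 5} then (f, 0)
  else if p = {1, 2} then (s, 0)
  else if p = {1, 3} then (t, f)
  else if p = {1, 4} then (0, f)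
  else if p = {1, 5} then (s, t)
  else if p = {2, 3} then (f, f)
  else if p = {2, 4} then (s, f)
  else if p = {2, 5} then (0, t)
  else if p = {3, 4} then (t, 0)
  else if p = {3, 5} then (f, s)
  else if p = {4, 5} then (s, s)
  else 0

/-- D(x,y): the set of duads whose β-image lies in the submodule R(x,y). -/
def Dset (x y : Rring) : Set (Finset (Fin 6)) := {p | IsDuad p ∧ β p ∈ RM x y}

/-- The number of the nine distinguished submodules containing the β-image of the
syntheme L. -/
noncomputable def Ncount (L : Finset (Finset (Fin 6))) : ℕ :=
  {M : Set (Rring × Rring) | (∃ g ∈ gens, M = RM g.1 g.2) ∧ ∀ q ∈ L, β q ∈ M}.ncard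

/-- `p` is the point of concurrence of the submodule R(x,y) generated by `g = (x,y)`:
the trace D(x,y) is the union of three distinct synthemes pairwise meeting in {p}. -/
def IsConc (g : Rring × Rring) (p : Finset (Fin 6)) : Prop :=
  IsDuad p ∧ ∃ L1 L2 L3 : Finset (Finset (Fin 6)),
    IsSyntheme L1 ∧ IsSyntheme L2 ∧ IsSyntheme L3 ∧
    L1 ≠ L2 ∧ L1 ≠ L3 ∧ L2 ≠ L3 ∧
    Dset g.1 g.2 = ↑L1 ∪ ↑L2 ∪ ↑L3 ∧
    (↑L1 ∩ ↑L2 : Set (Finset (Fin 6))) = {p} ∧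
    (↑L1 ∩ ↑L3 : Set (Finset (Fin 6))) = {p} ∧
    (↑L2 ∩ ↑L3 : Set (Finset (Fin 6))) = {p}

/-- P: the set of the points of concurrence of the nine distinguished submodules. -/
def Pset : Set (Finset (Fin 6)) := {p | ∃ g ∈ gens, IsConc g p}

/-- Λ: the set of synthemes whose β-image is contained in three of the nine
distinguished submodules. -/
def Lams : Set (Finset (Finset (Fin 6))) := {L | IsSyntheme L ∧ Ncount L = 3}


set_option maxRecDepth 40000 in
lemma m_entries (a b c d : ZMod 2) : m a b c d 0 0 = a ∧ m a b c d 1 1 = b ∧ m a b c d 0 1 = c ∧ m a b c d 0 2 = d :=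
  ⟨rfl, rfl, rfl, rfl⟩

abbrev Tup := ZMod 2 × ZMod 2 × ZMod 2 × ZMod 2

def tmul : Tup → Tup → Tup := fun ⟨a,b,c,d⟩ ⟨a',b',c',d'⟩ => (a*a', b*b', a*c'+c*b', a*d'+d*b')

def co (α : Rring) : Tup := (α.1 0 0, α.1 1 1, α.1 0 1, α.1 0 2)

lemma co_mm (a b c d : ZMod 2) : co (mm a b c d) = (a, b, c, d) := rfl

lemma mm_co (α : Rring) : mm (co α).1 (co α).2.1 (co α).2.2.1 (co α).2.2.2 = α := by
  obtain ⟨A, hA⟩ := α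
  obtain ⟨a, b, c, d, rfl⟩ := hA
  rfl

lemma mm_mul (a b c d a' b' c' d' : ZMod 2) :
    mm a b c d * mm a' b' c' d' = mm (a*a') (b*b') (a*c'+c*b') (a*d'+d*b') :=
  Subtype.ext (m_mul a b c d a' b' c' d')

lemma co_mul (α x : Rring) : co (α * x) = tmul (co α) (co x) := by
  conv_lhs => rw [← mm_co α, ← mm_co x, mm_mul]
  rfl

lemma co_inj {α γ : Rring} (h : co α = co γ) : α = γ := by
  rw [← mm_co α, ← mm_co γ, h]

def tuplist : List Tup :=
  [(0,0,0,0),(0,0,0,1),(0,0,1,0),(0,0,1,1),(0,1,0,0),(0,1,0,1),(0,1,1,0),(0,1,1,1),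
   (1,0,0,0),(1,0,0,1),(1,0,1,0),(1,0,1,1),(1,1,0,0),(1,1,0,1),(1,1,1,0),(1,1,1,1)]

lemma mem_tuplist (τ : Tup) : τ ∈ tuplist := by
  obtain ⟨a,b,c,d⟩ := τ
  revert a b c d; decide

instance instRMdec (x y : Rring) : DecidablePred (· ∈ RM x y) := fun p =>
  decidable_of_iff (∃ τ ∈ tuplist, co p.1 = tmul τ (co x) ∧ co p.2 = tmul τ (co y))
    (by
      constructor
      · rintro ⟨τ, -, h1, h2⟩
        obtain ⟨a,b,c,d⟩ := τ
        refine ⟨mm a b c d, ?_⟩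
        have e1 : p.1 = mm a b c d * x := by
          apply co_inj; rw [co_mul, co_mm]; exact h1
        have e2 : p.2 = mm a b c d * y := by
          apply co_inj; rw [co_mul, co_mm]; exact h2
        rw [← e1, ← e2]
      · rintro ⟨α, h⟩
        exact ⟨co α, mem_tuplist _, by rw [h, co_mul], by rw [h, co_mul]⟩)

instance instDuadDec : DecidablePred IsDuad := fun p =>
  decidable_of_iff (p.card = 2) Iff.rfl

instance instSynDec : DecidablePred IsSyntheme := fun L =>
  decidable_of_iff (L.card = 3 ∧ (∀ p ∈ L, IsDuad p) ∧
    ∀ i : Fin 6, ∃ p, (p ∈ L ∧ i ∈ p) ∧ ∀ q, (q ∈ L ∧ i ∈ q) → q = p) Iff.rfl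

instance instDsetdec (x y : Rring) : DecidablePred (· ∈ Dset x y) := fun p =>
  decidable_of_iff (IsDuad p ∧ β p ∈ RM x y) Iff.rfl

lemma RM_self (x y : Rring) : (x, y) ∈ RM x y := ⟨1, by rw [one_mul, one_mul]⟩

lemma RM_ne {x y x' y' : Rring} (hn : (x', y') ∉ RM x y) : RM x y ≠ RM x' y' :=
  fun he => hn (by rw [he]; exact RM_self x' y')

lemma conc_disj {g : Rring × Rring} {p : Finset (Fin 6)} (h : IsConc g p) :
    p ∈ Dset g.1 g.2 ∧ ∀ q ∈ Dset g.1 g.2, q ≠ p → p ∩ q = ∅ := by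
  obtain ⟨hd, L1, L2, L3, hS1, hS2, hS3, -, -, -, hU, h12, h13, h23⟩ := h
  have hp12 : p ∈ (↑L1 ∩ ↑L2 : Set (Finset (Fin 6))) := by rw [h12]; exact rfl
  have hp23 : p ∈ (↑L2 ∩ ↑L3 : Set (Finset (Fin 6))) := by rw [h23]; exact rfl
  have hp1 : p ∈ L1 := hp12.1
  have hp2 : p ∈ L2 := hp12.2
  have hp3 : p ∈ L3 := hp23.2
  constructor
  · rw [hU]; exact Or.inl (Or.inl hp1)
  · intro q hq hne
    have hq' : q ∈ L1 ∨ q ∈ L2 ∨ q ∈ L3 := by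
      have hq2 : q ∈ (↑L1 ∪ ↑L2 ∪ ↑L3 : Set (Finset (Fin 6))) := hU ▸ hq
      simpa [Set.mem_union, or_assoc] using hq2
    rw [Finset.eq_empty_iff_forall_notMem]
    intro i hi
    rw [Finset.mem_inter] at hi
    have key : ∀ (L : Finset (Finset (Fin 6))), IsSyntheme L → p ∈ L → q ∈ L → False := by
      intro L hS hpL hqL
      obtain ⟨r, -, hr⟩ := hS.2.2 i
      exact hne ((hr q ⟨hqL, hi.2⟩).trans (hr p ⟨hpL, hi.1⟩).symm)
    rcases hq' with h | h | h
    · exact key L1 hS1 hp1 h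
    · exact key L2 hS2 hp2 h
    · exact key L3 hS3 hp3 h

lemma conc_char (x y : Rring) (D : List (Finset (Fin 6))) (pg : Finset (Fin 6))
    (L1 L2 L3 : Finset (Finset (Fin 6)))
    (hD : ∀ q : Finset (Fin 6), q ∈ Dset x y ↔ q ∈ D)
    (hS1 : IsSyntheme L1) (hS2 : IsSyntheme L2) (hS3 : IsSyntheme L3)
    (h12 : L1 ≠ L2) (h13 : L1 ≠ L3) (h23 : L2 ≠ L3)
    (hcup : ∀ q : Finset (Fin 6), q ∈ D ↔ (q ∈ L1 ∨ q ∈ L2) ∨ q ∈ L3)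
    (hi12 : ∀ q : Finset (Fin 6), q ∈ L1 → q ∈ L2 → q = pg)
    (hi13 : ∀ q : Finset (Fin 6), q ∈ L1 → q ∈ L3 → q = pg)
    (hi23 : ∀ q : Finset (Fin 6), q ∈ L2 → q ∈ L3 → q = pg)
    (hm1 : pg ∈ L1) (hm2 : pg ∈ L2) (hm3 : pg ∈ L3)
    (huniq : ∀ p : Finset (Fin 6), p ∈ D → (∀ q ∈ D, q ≠ p → p ∩ q = ∅) → p = pg) :
    ∀ p, IsConc (x, y) p ↔ p = pg := by
  intro p
  constructor
  · intro h
    obtain ⟨hmem, hdisj⟩ := conc_disj h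
    exact huniq p ((hD p).mp hmem) (fun q hq hne => hdisj q ((hD q).mpr hq) hne)
  · rintro rfl
    refine ⟨hS1.2.1 _ hm1, L1, L2, L3, hS1, hS2, hS3, h12, h13, h23, ?_, ?_, ?_, ?_⟩
    · ext q
      simp only [Set.mem_union, Finset.mem_coe]
      exact (hD q).trans (hcup q)
    · ext q
      simp only [Set.mem_inter_iff, Finset.mem_coe, Set.mem_singleton_iff]
      exact ⟨fun h => hi12 q h.1 h.2, fun h => h ▸ ⟨hm1, hm2⟩⟩
    · ext q
      simp only [Set.mem_inter_iff, Finset.mem_coe, Set.mem_singleton_iff]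
      exact ⟨fun h => hi13 q h.1 h.2, fun h => h ▸ ⟨hm1, hm3⟩⟩
    · ext q
      simp only [Set.mem_inter_iff, Finset.mem_coe, Set.mem_singleton_iff]
      exact ⟨fun h => hi23 q h.1 h.2, fun h => h ▸ ⟨hm2, hm3⟩⟩

lemma cover_of_syntheme {a b c : Finset (Fin 6)} (h : IsSyntheme {a, b, c}) :
    a ∪ b ∪ c = Finset.univ := by
  rw [Finset.eq_univ_iff_forall]
  intro i
  obtain ⟨r, ⟨hr, hir⟩, -⟩ := h.2.2 i
  simp only [Finset.mem_insert, Finset.mem_singleton] at hr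
  simp only [Finset.mem_union]
  rcases hr with rfl | rfl | rfl
  · exact Or.inl (Or.inl hir)
  · exact Or.inl (Or.inr hir)
  · exact Or.inr hir

lemma ncount_le_one (S : Finset (Finset (Fin 6))) (g0 : Rring × Rring)
    (hcl : ∀ g ∈ gens, (∀ q ∈ S, β q ∈ RM g.1 g.2) → RM g.1 g.2 = RM g0.1 g0.2) :
    Ncount S ≤ 1 := by
  unfold Ncount
  have hsub : {M : Set (Rring × Rring) | (∃ g ∈ gens, M = RM g.1 g.2) ∧ ∀ q ∈ S, β q ∈ M}
      ⊆ {RM g0.1 g0.2} := by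
    rintro M ⟨⟨g, hg, rfl⟩, hall⟩
    exact hcl g hg hall
  have hle := Set.ncard_le_ncard hsub (Set.finite_singleton _)
  simpa using hle

lemma ncount_eq_three (S : Finset (Finset (Fin 6))) (g1 g2 g3 : Rring × Rring)
    (hm1 : g1 ∈ gens) (hm2 : g2 ∈ gens) (hm3 : g3 ∈ gens)
    (ha1 : ∀ q ∈ S, β q ∈ RM g1.1 g1.2) (ha2 : ∀ q ∈ S, β q ∈ RM g2.1 g2.2)
    (ha3 : ∀ q ∈ S, β q ∈ RM g3.1 g3.2)
    (hcl : ∀ g ∈ gens, (∀ q ∈ S, β q ∈ RM g.1 g.2) →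
      RM g.1 g.2 = RM g1.1 g1.2 ∨ RM g.1 g.2 = RM g2.1 g2.2 ∨ RM g.1 g.2 = RM g3.1 g3.2)
    (hn12 : (g2.1, g2.2) ∉ RM g1.1 g1.2) (hn13 : (g3.1, g3.2) ∉ RM g1.1 g1.2)
    (hn23 : (g3.1, g3.2) ∉ RM g2.1 g2.2) :
    Ncount S = 3 := by
  have hset : {M : Set (Rring × Rring) | (∃ g ∈ gens, M = RM g.1 g.2) ∧ ∀ q ∈ S, β q ∈ M}
      = {RM g1.1 g1.2, RM g2.1 g2.2, RM g3.1 g3.2} := by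
    ext M
    simp only [Set.mem_setOf_eq, Set.mem_insert_iff, Set.mem_singleton_iff]
    constructor
    · rintro ⟨⟨g, hg, rfl⟩, hall⟩
      exact hcl g hg hall
    · rintro (rfl | rfl | rfl)
      exacts [⟨⟨g1, hm1, rfl⟩, ha1⟩, ⟨⟨g2, hm2, rfl⟩, ha2⟩, ⟨⟨g3, hm3, rfl⟩, ha3⟩]
  have hne1 : RM g1.1 g1.2 ∉ ({RM g2.1 g2.2, RM g3.1 g3.2} : Set (Set (Rring × Rring))) := by
    simp only [Set.mem_insert_iff, Set.mem_singleton_iff]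
    rintro (h | h)
    exacts [RM_ne hn12 h, RM_ne hn13 h]
  have hne2 : RM g2.1 g2.2 ∉ ({RM g3.1 g3.2} : Set (Set (Rring × Rring))) := by
    simp only [Set.mem_singleton_iff]
    intro h
    exact RM_ne hn23 h
  unfold Ncount
  rw [hset, Set.ncard_insert_of_notMem hne1 ((Set.finite_singleton _).insert _),
      Set.ncard_insert_of_notMem hne2 (Set.finite_singleton _), Set.ncard_singleton]

def D1 : List (Finset (Fin 6)) := [{0,1},{0,3},{0,4},{1,3},{1,4},{2,5},{3,4}]

def D2 : List (Finset (Fin 6)) := [{0,2},{0,3},{0,5},{1,4},{2,3},{2,5},{3,5}]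

def D3 : List (Finset (Fin 6)) := [{0,3},{1,2},{1,4},{1,5},{2,4},{2,5},{4,5}]

def D4 : List (Finset (Fin 6)) := [{0,1},{2,3},{2,4},{2,5},{3,4},{3,5},{4,5}]

def D5 : List (Finset (Fin 6)) := [{0,1},{0,4},{0,5},{1,4},{1,5},{2,3},{4,5}]

def D6 : List (Finset (Fin 6)) := [{0,1},{0,2},{0,3},{1,2},{1,3},{2,3},{4,5}]

def D7 : List (Finset (Fin 6)) := [{0,3},{0,4},{0,5},{1,2},{3,4},{3,5},{4,5}]

def D8 : List (Finset (Fin 6)) := [{0,5},{1,2},{1,3},{1,4},{2,3},{2,4},{3,4}]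

def D9 : List (Finset (Fin 6)) := [{0,1},{0,2},{0,5},{1,2},{1,5},{2,5},{3,4}]

set_option maxRecDepth 40000 in
set_option maxHeartbeats 1000000 in
lemma hD1 : ∀ q : Finset (Fin 6), q ∈ Dset t e ↔ q ∈ D1 := by decide

set_option maxRecDepth 40000 in
set_option maxHeartbeats 1000000 in
lemma hD2 : ∀ q : Finset (Fin 6), q ∈ Dset f e ↔ q ∈ D2 := by decide

set_option maxRecDepth 40000 in
set_option maxHeartbeats 1000000 in
lemma hD3 : ∀ q : Finset (Fin 6), q ∈ Dset s e ↔ q ∈ D3 := by decide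

set_option maxRecDepth 40000 in
set_option maxHeartbeats 1000000 in
lemma hD4 : ∀ q : Finset (Fin 6), q ∈ Dset e u ↔ q ∈ D4 := by decide

set_option maxRecDepth 40000 in
set_option maxHeartbeats 1000000 in
lemma hD5 : ∀ q : Finset (Fin 6), q ∈ Dset e v ↔ q ∈ D5 := by decide

set_option maxRecDepth 40000 in
set_option maxHeartbeats 1000000 in
lemma hD6 : ∀ q : Finset (Fin 6), q ∈ Dset e w ↔ q ∈ D6 := by decide

set_option maxRecDepth 40000 in
set_option maxHeartbeats 1000000 in
lemma hD7 : ∀ q : Finset (Fin 6), q ∈ Dset e s ↔ q ∈ D7 := by decide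

set_option maxRecDepth 40000 in
set_option maxHeartbeats 1000000 in
lemma hD8 : ∀ q : Finset (Fin 6), q ∈ Dset e f ↔ q ∈ D8 := by decide

set_option maxRecDepth 40000 in
set_option maxHeartbeats 1000000 in
lemma hD9 : ∀ q : Finset (Fin 6), q ∈ Dset e t ↔ q ∈ D9 := by decide

set_option maxRecDepth 40000 in
set_option maxHeartbeats 1000000 in
lemma tri1 : ∀ a ∈ D1, ∀ b ∈ D1, ∀ c ∈ D1, a ∪ b ∪ c = Finset.univ →
    ({a,b,c} : Finset (Finset (Fin 6))) = {({0,1} : Finset (Fin 6)),({2,5} : Finset (Fin 6)),({3,4} : Finset (Fin 6))} ∨ ({a,b,c} : Finset (Finset (Fin 6))) = {({0,3} : Finset (Fin 6)),({1,4} : Finset (Fin 6)),({2,5} : Finset (Fin 6))} ∨ ({a,b,c} : Finset (Finset (Fin 6))) = {({0,4} : Finset (Fin 6)),({1,3} : Finset (Fin 6)),({2,5} : Finset (Fin 6))} := by decide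

set_option maxRecDepth 40000 in
set_option maxHeartbeats 1000000 in
lemma tri2 : ∀ a ∈ D2, ∀ b ∈ D2, ∀ c ∈ D2, a ∪ b ∪ c = Finset.univ →
    ({a,b,c} : Finset (Finset (Fin 6))) = {({0,2} : Finset (Fin 6)),({1,4} : Finset (Fin 6)),({3,5} : Finset (Fin 6))} ∨ ({a,b,c} : Finset (Finset (Fin 6))) = {({0,3} : Finset (Fin 6)),({1,4} : Finset (Fin 6)),({2,5} : Finset (Fin 6))} ∨ ({a,b,c} : Finset (Finset (Fin 6))) = {({0,5} : Finset (Fin 6)),({1,4} : Finset (Fin 6)),({2,3} : Finset (Fin 6))} := by decide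

set_option maxRecDepth 40000 in
set_option maxHeartbeats 1000000 in
lemma tri3 : ∀ a ∈ D3, ∀ b ∈ D3, ∀ c ∈ D3, a ∪ b ∪ c = Finset.univ →
    ({a,b,c} : Finset (Finset (Fin 6))) = {({0,3} : Finset (Fin 6)),({1,2} : Finset (Fin 6)),({4,5} : Finset (Fin 6))} ∨ ({a,b,c} : Finset (Finset (Fin 6))) = {({0,3} : Finset (Fin 6)),({1,4} : Finset (Fin 6)),({2,5} : Finset (Fin 6))} ∨ ({a,b,c} : Finset (Finset (Fin 6))) = {({0,3} : Finset (Fin 6)),({1,5} : Finset (Fin 6)),({2,4} : Finset (Fin 6))} := by decide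

set_option maxRecDepth 40000 in
set_option maxHeartbeats 1000000 in
lemma tri4 : ∀ a ∈ D4, ∀ b ∈ D4, ∀ c ∈ D4, a ∪ b ∪ c = Finset.univ →
    ({a,b,c} : Finset (Finset (Fin 6))) = {({0,1} : Finset (Fin 6)),({2,3} : Finset (Fin 6)),({4,5} : Finset (Fin 6))} ∨ ({a,b,c} : Finset (Finset (Fin 6))) = {({0,1} : Finset (Fin 6)),({2,4} : Finset (Fin 6)),({3,5} : Finset (Fin 6))} ∨ ({a,b,c} : Finset (Finset (Fin 6))) = {({0,1} : Finset (Fin 6)),({2,5} : Finset (Fin 6)),({3,4} : Finset (Fin 6))} := by decide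

set_option maxRecDepth 40000 in
set_option maxHeartbeats 1000000 in
lemma tri5 : ∀ a ∈ D5, ∀ b ∈ D5, ∀ c ∈ D5, a ∪ b ∪ c = Finset.univ →
    ({a,b,c} : Finset (Finset (Fin 6))) = {({0,1} : Finset (Fin 6)),({2,3} : Finset (Fin 6)),({4,5} : Finset (Fin 6))} ∨ ({a,b,c} : Finset (Finset (Fin 6))) = {({0,4} : Finset (Fin 6)),({1,5} : Finset (Fin 6)),({2,3} : Finset (Fin 6))} ∨ ({a,b,c} : Finset (Finset (Fin 6))) = {({0,5} : Finset (Fin 6)),({1,4} : Finset (Fin 6)),({2,3} : Finset (Fin 6))} := by decide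

set_option maxRecDepth 40000 in
set_option maxHeartbeats 1000000 in
lemma tri6 : ∀ a ∈ D6, ∀ b ∈ D6, ∀ c ∈ D6, a ∪ b ∪ c = Finset.univ →
    ({a,b,c} : Finset (Finset (Fin 6))) = {({0,1} : Finset (Fin 6)),({2,3} : Finset (Fin 6)),({4,5} : Finset (Fin 6))} ∨ ({a,b,c} : Finset (Finset (Fin 6))) = {({0,2} : Finset (Fin 6)),({1,3} : Finset (Fin 6)),({4,5} : Finset (Fin 6))} ∨ ({a,b,c} : Finset (Finset (Fin 6))) = {({0,3} : Finset (Fin 6)),({1,2} : Finset (Fin 6)),({4,5} : Finset (Fin 6))} := by decide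

set_option maxRecDepth 40000 in
set_option maxHeartbeats 1000000 in
lemma tri7 : ∀ a ∈ D7, ∀ b ∈ D7, ∀ c ∈ D7, a ∪ b ∪ c = Finset.univ →
    ({a,b,c} : Finset (Finset (Fin 6))) = {({0,3} : Finset (Fin 6)),({1,2} : Finset (Fin 6)),({4,5} : Finset (Fin 6))} ∨ ({a,b,c} : Finset (Finset (Fin 6))) = {({0,4} : Finset (Fin 6)),({1,2} : Finset (Fin 6)),({3,5} : Finset (Fin 6))} ∨ ({a,b,c} : Finset (Finset (Fin 6))) = {({0,5} : Finset (Fin 6)),({1,2} : Finset (Fin 6)),({3,4} : Finset (Fin 6))} := by decide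

set_option maxRecDepth 40000 in
set_option maxHeartbeats 1000000 in
lemma tri8 : ∀ a ∈ D8, ∀ b ∈ D8, ∀ c ∈ D8, a ∪ b ∪ c = Finset.univ →
    ({a,b,c} : Finset (Finset (Fin 6))) = {({0,5} : Finset (Fin 6)),({1,2} : Finset (Fin 6)),({3,4} : Finset (Fin 6))} ∨ ({a,b,c} : Finset (Finset (Fin 6))) = {({0,5} : Finset (Fin 6)),({1,3} : Finset (Fin 6)),({2,4} : Finset (Fin 6))} ∨ ({a,b,c} : Finset (Finset (Fin 6))) = {({0,5} : Finset (Fin 6)),({1,4} : Finset (Fin 6)),({2,3} : Finset (Fin 6))} := by decide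

set_option maxRecDepth 40000 in
set_option maxHeartbeats 1000000 in
lemma tri9 : ∀ a ∈ D9, ∀ b ∈ D9, ∀ c ∈ D9, a ∪ b ∪ c = Finset.univ →
    ({a,b,c} : Finset (Finset (Fin 6))) = {({0,1} : Finset (Fin 6)),({2,5} : Finset (Fin 6)),({3,4} : Finset (Fin 6))} ∨ ({a,b,c} : Finset (Finset (Fin 6))) = {({0,2} : Finset (Fin 6)),({1,5} : Finset (Fin 6)),({3,4} : Finset (Fin 6))} ∨ ({a,b,c} : Finset (Finset (Fin 6))) = {({0,5} : Finset (Fin 6)),({1,2} : Finset (Fin 6)),({3,4} : Finset (Fin 6))} := by decide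

set_option maxRecDepth 40000 in
set_option maxHeartbeats 1000000 in
lemma conc1 : ∀ p, IsConc (t, e) p ↔ p = {2,5} :=
  conc_char t e D1 {2,5} {({0,1} : Finset (Fin 6)),({2,5} : Finset (Fin 6)),({3,4} : Finset (Fin 6))} {({0,3} : Finset (Fin 6)),({1,4} : Finset (Fin 6)),({2,5} : Finset (Fin 6))} {({0,4} : Finset (Fin 6)),({1,3} : Finset (Fin 6)),({2,5} : Finset (Fin 6))}
    hD1 (by decide) (by decide) (by decide) (by decide) (by decide) (by decide)
    (by decide) (by decide) (by decide) (by decide) (by decide) (by decide) (by decide) (by decide)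

set_option maxRecDepth 40000 in
set_option maxHeartbeats 1000000 in
lemma conc2 : ∀ p, IsConc (f, e) p ↔ p = {1,4} :=
  conc_char f e D2 {1,4} {({0,2} : Finset (Fin 6)),({1,4} : Finset (Fin 6)),({3,5} : Finset (Fin 6))} {({0,3} : Finset (Fin 6)),({1,4} : Finset (Fin 6)),({2,5} : Finset (Fin 6))} {({0,5} : Finset (Fin 6)),({1,4} : Finset (Fin 6)),({2,3} : Finset (Fin 6))}
    hD2 (by decide) (by decide) (by decide) (by decide) (by decide) (by decide)
    (by decide) (by decide) (by decide) (by decide) (by decide) (by decide) (by decide) (by decide)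

set_option maxRecDepth 40000 in
set_option maxHeartbeats 1000000 in
lemma conc3 : ∀ p, IsConc (s, e) p ↔ p = {0,3} :=
  conc_char s e D3 {0,3} {({0,3} : Finset (Fin 6)),({1,2} : Finset (Fin 6)),({4,5} : Finset (Fin 6))} {({0,3} : Finset (Fin 6)),({1,4} : Finset (Fin 6)),({2,5} : Finset (Fin 6))} {({0,3} : Finset (Fin 6)),({1,5} : Finset (Fin 6)),({2,4} : Finset (Fin 6))}
    hD3 (by decide) (by decide) (by decide) (by decide) (by decide) (by decide)
    (by decide) (by decide) (by decide) (by decide) (by decide) (by decide) (by decide) (by decide)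

set_option maxRecDepth 40000 in
set_option maxHeartbeats 1000000 in
lemma conc4 : ∀ p, IsConc (e, u) p ↔ p = {0,1} :=
  conc_char e u D4 {0,1} {({0,1} : Finset (Fin 6)),({2,3} : Finset (Fin 6)),({4,5} : Finset (Fin 6))} {({0,1} : Finset (Fin 6)),({2,4} : Finset (Fin 6)),({3,5} : Finset (Fin 6))} {({0,1} : Finset (Fin 6)),({2,5} : Finset (Fin 6)),({3,4} : Finset (Fin 6))}
    hD4 (by decide) (by decide) (by decide) (by decide) (by decide) (by decide)
    (by decide) (by decide) (by decide) (by decide) (by decide) (by decide) (by decide) (by decide)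

set_option maxRecDepth 40000 in
set_option maxHeartbeats 1000000 in
lemma conc5 : ∀ p, IsConc (e, v) p ↔ p = {2,3} :=
  conc_char e v D5 {2,3} {({0,1} : Finset (Fin 6)),({2,3} : Finset (Fin 6)),({4,5} : Finset (Fin 6))} {({0,4} : Finset (Fin 6)),({1,5} : Finset (Fin 6)),({2,3} : Finset (Fin 6))} {({0,5} : Finset (Fin 6)),({1,4} : Finset (Fin 6)),({2,3} : Finset (Fin 6))}
    hD5 (by decide) (by decide) (by decide) (by decide) (by decide) (by decide)
    (by decide) (by decide) (by decide) (by decide) (by decide) (by decide) (by decide) (by decide)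

set_option maxRecDepth 40000 in
set_option maxHeartbeats 1000000 in
lemma conc6 : ∀ p, IsConc (e, w) p ↔ p = {4,5} :=
  conc_char e w D6 {4,5} {({0,1} : Finset (Fin 6)),({2,3} : Finset (Fin 6)),({4,5} : Finset (Fin 6))} {({0,2} : Finset (Fin 6)),({1,3} : Finset (Fin 6)),({4,5} : Finset (Fin 6))} {({0,3} : Finset (Fin 6)),({1,2} : Finset (Fin 6)),({4,5} : Finset (Fin 6))}
    hD6 (by decide) (by decide) (by decide) (by decide) (by decide) (by decide)
    (by decide) (by decide) (by decide) (by decide) (by decide) (by decide) (by decide) (by decide)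

set_option maxRecDepth 40000 in
set_option maxHeartbeats 1000000 in
lemma conc7 : ∀ p, IsConc (e, s) p ↔ p = {1,2} :=
  conc_char e s D7 {1,2} {({0,3} : Finset (Fin 6)),({1,2} : Finset (Fin 6)),({4,5} : Finset (Fin 6))} {({0,4} : Finset (Fin 6)),({1,2} : Finset (Fin 6)),({3,5} : Finset (Fin 6))} {({0,5} : Finset (Fin 6)),({1,2} : Finset (Fin 6)),({3,4} : Finset (Fin 6))}
    hD7 (by decide) (by decide) (by decide) (by decide) (by decide) (by decide)
    (by decide) (by decide) (by decide) (by decide) (by decide) (by decide) (by decide) (by decide)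

set_option maxRecDepth 40000 in
set_option maxHeartbeats 1000000 in
lemma conc8 : ∀ p, IsConc (e, f) p ↔ p = {0,5} :=
  conc_char e f D8 {0,5} {({0,5} : Finset (Fin 6)),({1,2} : Finset (Fin 6)),({3,4} : Finset (Fin 6))} {({0,5} : Finset (Fin 6)),({1,3} : Finset (Fin 6)),({2,4} : Finset (Fin 6))} {({0,5} : Finset (Fin 6)),({1,4} : Finset (Fin 6)),({2,3} : Finset (Fin 6))}
    hD8 (by decide) (by decide) (by decide) (by decide) (by decide) (by decide)
    (by decide) (by decide) (by decide) (by decide) (by decide) (by decide) (by decide) (by decide)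

set_option maxRecDepth 40000 in
set_option maxHeartbeats 1000000 in
lemma conc9 : ∀ p, IsConc (e, t) p ↔ p = {3,4} :=
  conc_char e t D9 {3,4} {({0,1} : Finset (Fin 6)),({2,5} : Finset (Fin 6)),({3,4} : Finset (Fin 6))} {({0,2} : Finset (Fin 6)),({1,5} : Finset (Fin 6)),({3,4} : Finset (Fin 6))} {({0,5} : Finset (Fin 6)),({1,2} : Finset (Fin 6)),({3,4} : Finset (Fin 6))}
    hD9 (by decide) (by decide) (by decide) (by decide) (by decide) (by decide)
    (by decide) (by decide) (by decide) (by decide) (by decide) (by decide) (by decide) (by decide)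

set_option maxRecDepth 40000 in
set_option maxHeartbeats 1000000 in
lemma ncA1 : Ncount {({0,1} : Finset (Fin 6)),({2,3} : Finset (Fin 6)),({4,5} : Finset (Fin 6))} = 3 :=
  ncount_eq_three {({0,1} : Finset (Fin 6)),({2,3} : Finset (Fin 6)),({4,5} : Finset (Fin 6))} (e, u) (e, v) (e, w)
    (by simp [gens]) (by simp [gens]) (by simp [gens])
    (by decide) (by decide) (by decide)
    (by
      intro g hg hall
      fin_cases hg <;>
        first
          | exact absurd hall (by decide)
          | exact Or.inl rfl
          | exact Or.inr (Or.inl rfl)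
          | exact Or.inr (Or.inr rfl))
    (by decide) (by decide) (by decide)

set_option maxRecDepth 40000 in
set_option maxHeartbeats 1000000 in
lemma ncA2 : Ncount {({0,1} : Finset (Fin 6)),({2,5} : Finset (Fin 6)),({3,4} : Finset (Fin 6))} = 3 :=
  ncount_eq_three {({0,1} : Finset (Fin 6)),({2,5} : Finset (Fin 6)),({3,4} : Finset (Fin 6))} (t, e) (e, u) (e, t)
    (by simp [gens]) (by simp [gens]) (by simp [gens])
    (by decide) (by decide) (by decide)
    (by
      intro g hg hall
      fin_cases hg <;>
        first
          | exact absurd hall (by decide)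
          | exact Or.inl rfl
          | exact Or.inr (Or.inl rfl)
          | exact Or.inr (Or.inr rfl))
    (by decide) (by decide) (by decide)

set_option maxRecDepth 40000 in
set_option maxHeartbeats 1000000 in
lemma ncA3 : Ncount {({0,3} : Finset (Fin 6)),({1,2} : Finset (Fin 6)),({4,5} : Finset (Fin 6))} = 3 :=
  ncount_eq_three {({0,3} : Finset (Fin 6)),({1,2} : Finset (Fin 6)),({4,5} : Finset (Fin 6))} (s, e) (e, w) (e, s)
    (by simp [gens]) (by simp [gens]) (by simp [gens])
    (by decide) (by decide) (by decide)
    (by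
      intro g hg hall
      fin_cases hg <;>
        first
          | exact absurd hall (by decide)
          | exact Or.inl rfl
          | exact Or.inr (Or.inl rfl)
          | exact Or.inr (Or.inr rfl))
    (by decide) (by decide) (by decide)

set_option maxRecDepth 40000 in
set_option maxHeartbeats 1000000 in
lemma ncA4 : Ncount {({0,3} : Finset (Fin 6)),({1,4} : Finset (Fin 6)),({2,5} : Finset (Fin 6))} = 3 :=
  ncount_eq_three {({0,3} : Finset (Fin 6)),({1,4} : Finset (Fin 6)),({2,5} : Finset (Fin 6))} (t, e) (f, e) (s, e)
    (by simp [gens]) (by simp [gens]) (by simp [gens])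
    (by decide) (by decide) (by decide)
    (by
      intro g hg hall
      fin_cases hg <;>
        first
          | exact absurd hall (by decide)
          | exact Or.inl rfl
          | exact Or.inr (Or.inl rfl)
          | exact Or.inr (Or.inr rfl))
    (by decide) (by decide) (by decide)

set_option maxRecDepth 40000 in
set_option maxHeartbeats 1000000 in
lemma ncA5 : Ncount {({0,5} : Finset (Fin 6)),({1,2} : Finset (Fin 6)),({3,4} : Finset (Fin 6))} = 3 :=
  ncount_eq_three {({0,5} : Finset (Fin 6)),({1,2} : Finset (Fin 6)),({3,4} : Finset (Fin 6))} (e, s) (e, f) (e, t)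
    (by simp [gens]) (by simp [gens]) (by simp [gens])
    (by decide) (by decide) (by decide)
    (by
      intro g hg hall
      fin_cases hg <;>
        first
          | exact absurd hall (by decide)
          | exact Or.inl rfl
          | exact Or.inr (Or.inl rfl)
          | exact Or.inr (Or.inr rfl))
    (by decide) (by decide) (by decide)

set_option maxRecDepth 40000 in
set_option maxHeartbeats 1000000 in
lemma ncA6 : Ncount {({0,5} : Finset (Fin 6)),({1,4} : Finset (Fin 6)),({2,3} : Finset (Fin 6))} = 3 :=
  ncount_eq_three {({0,5} : Finset (Fin 6)),({1,4} : Finset (Fin 6)),({2,3} : Finset (Fin 6))} (f, e) (e, v) (e, f)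
    (by simp [gens]) (by simp [gens]) (by simp [gens])
    (by decide) (by decide) (by decide)
    (by
      intro g hg hall
      fin_cases hg <;>
        first
          | exact absurd hall (by decide)
          | exact Or.inl rfl
          | exact Or.inr (Or.inl rfl)
          | exact Or.inr (Or.inr rfl))
    (by decide) (by decide) (by decide)

set_option maxRecDepth 40000 in
set_option maxHeartbeats 1000000 in
lemma ncB1 : Ncount {({0,1} : Finset (Fin 6)),({2,4} : Finset (Fin 6)),({3,5} : Finset (Fin 6))} ≠ 3 := by
  have h := ncount_le_one {({0,1} : Finset (Fin 6)),({2,4} : Finset (Fin 6)),({3,5} : Finset (Fin 6))} (e, u)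
    (by
      intro g hg hall
      fin_cases hg <;> first | exact absurd hall (by decide) | rfl)
  omega

set_option maxRecDepth 40000 in
set_option maxHeartbeats 1000000 in
lemma ncB2 : Ncount {({0,2} : Finset (Fin 6)),({1,3} : Finset (Fin 6)),({4,5} : Finset (Fin 6))} ≠ 3 := by
  have h := ncount_le_one {({0,2} : Finset (Fin 6)),({1,3} : Finset (Fin 6)),({4,5} : Finset (Fin 6))} (e, w)
    (by
      intro g hg hall
      fin_cases hg <;> first | exact absurd hall (by decide) | rfl)
  omega

set_option maxRecDepth 40000 in
set_option maxHeartbeats 1000000 in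
lemma ncB3 : Ncount {({0,2} : Finset (Fin 6)),({1,4} : Finset (Fin 6)),({3,5} : Finset (Fin 6))} ≠ 3 := by
  have h := ncount_le_one {({0,2} : Finset (Fin 6)),({1,4} : Finset (Fin 6)),({3,5} : Finset (Fin 6))} (f, e)
    (by
      intro g hg hall
      fin_cases hg <;> first | exact absurd hall (by decide) | rfl)
  omega

set_option maxRecDepth 40000 in
set_option maxHeartbeats 1000000 in
lemma ncB4 : Ncount {({0,2} : Finset (Fin 6)),({1,5} : Finset (Fin 6)),({3,4} : Finset (Fin 6))} ≠ 3 := by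
  have h := ncount_le_one {({0,2} : Finset (Fin 6)),({1,5} : Finset (Fin 6)),({3,4} : Finset (Fin 6))} (e, t)
    (by
      intro g hg hall
      fin_cases hg <;> first | exact absurd hall (by decide) | rfl)
  omega

set_option maxRecDepth 40000 in
set_option maxHeartbeats 1000000 in
lemma ncB5 : Ncount {({0,3} : Finset (Fin 6)),({1,5} : Finset (Fin 6)),({2,4} : Finset (Fin 6))} ≠ 3 := by
  have h := ncount_le_one {({0,3} : Finset (Fin 6)),({1,5} : Finset (Fin 6)),({2,4} : Finset (Fin 6))} (s, e)
    (by
      intro g hg hall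
      fin_cases hg <;> first | exact absurd hall (by decide) | rfl)
  omega

set_option maxRecDepth 40000 in
set_option maxHeartbeats 1000000 in
lemma ncB6 : Ncount {({0,4} : Finset (Fin 6)),({1,2} : Finset (Fin 6)),({3,5} : Finset (Fin 6))} ≠ 3 := by
  have h := ncount_le_one {({0,4} : Finset (Fin 6)),({1,2} : Finset (Fin 6)),({3,5} : Finset (Fin 6))} (e, s)
    (by
      intro g hg hall
      fin_cases hg <;> first | exact absurd hall (by decide) | rfl)
  omega

set_option maxRecDepth 40000 in
set_option maxHeartbeats 1000000 in
lemma ncB7 : Ncount {({0,4} : Finset (Fin 6)),({1,3} : Finset (Fin 6)),({2,5} : Finset (Fin 6))} ≠ 3 := by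
  have h := ncount_le_one {({0,4} : Finset (Fin 6)),({1,3} : Finset (Fin 6)),({2,5} : Finset (Fin 6))} (t, e)
    (by
      intro g hg hall
      fin_cases hg <;> first | exact absurd hall (by decide) | rfl)
  omega

set_option maxRecDepth 40000 in
set_option maxHeartbeats 1000000 in
lemma ncB8 : Ncount {({0,4} : Finset (Fin 6)),({1,5} : Finset (Fin 6)),({2,3} : Finset (Fin 6))} ≠ 3 := by
  have h := ncount_le_one {({0,4} : Finset (Fin 6)),({1,5} : Finset (Fin 6)),({2,3} : Finset (Fin 6))} (e, v)
    (by
      intro g hg hall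
      fin_cases hg <;> first | exact absurd hall (by decide) | rfl)
  omega

set_option maxRecDepth 40000 in
set_option maxHeartbeats 1000000 in
lemma ncB9 : Ncount {({0,5} : Finset (Fin 6)),({1,3} : Finset (Fin 6)),({2,4} : Finset (Fin 6))} ≠ 3 := by
  have h := ncount_le_one {({0,5} : Finset (Fin 6)),({1,3} : Finset (Fin 6)),({2,4} : Finset (Fin 6))} (e, f)
    (by
      intro g hg hall
      fin_cases hg <;> first | exact absurd hall (by decide) | rfl)
  omega

def P9f : Finset (Finset (Fin 6)) := {({2,5} : Finset (Fin 6)),({1,4} : Finset (Fin 6)),({0,3} : Finset (Fin 6)),({0,1} : Finset (Fin 6)),({2,3} : Finset (Fin 6)),({4,5} : Finset (Fin 6)),({1,2} : Finset (Fin 6)),({0,5} : Finset (Fin 6)),({3,4} : Finset (Fin 6))}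

def Λf : Finset (Finset (Finset (Fin 6))) := {{({0,1} : Finset (Fin 6)),({2,3} : Finset (Fin 6)),({4,5} : Finset (Fin 6))},{({0,1} : Finset (Fin 6)),({2,5} : Finset (Fin 6)),({3,4} : Finset (Fin 6))},{({0,3} : Finset (Fin 6)),({1,2} : Finset (Fin 6)),({4,5} : Finset (Fin 6))},{({0,3} : Finset (Fin 6)),({1,4} : Finset (Fin 6)),({2,5} : Finset (Fin 6))},{({0,5} : Finset (Fin 6)),({1,2} : Finset (Fin 6)),({3,4} : Finset (Fin 6))},{({0,5} : Finset (Fin 6)),({1,4} : Finset (Fin 6)),({2,3} : Finset (Fin 6))}}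

set_option maxRecDepth 40000 in
set_option maxHeartbeats 1000000 in
lemma Pset_eq : Pset = ↑P9f := by
  ext p
  simp only [Pset, Set.mem_setOf_eq]
  constructor
  · rintro ⟨g, hg, h⟩
    fin_cases hg <;> simp only [conc1, conc2, conc3, conc4, conc5, conc6, conc7, conc8, conc9] at h <;> subst h <;>
      exact Finset.mem_coe.mpr (by decide)
  · intro hp
    rw [Finset.mem_coe] at hp
    fin_cases hp

    · exact ⟨(t, e), by simp [gens], (conc1 _).mpr rfl⟩

    · exact ⟨(f, e), by simp [gens], (conc2 _).mpr rfl⟩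

    · exact ⟨(s, e), by simp [gens], (conc3 _).mpr rfl⟩

    · exact ⟨(e, u), by simp [gens], (conc4 _).mpr rfl⟩

    · exact ⟨(e, v), by simp [gens], (conc5 _).mpr rfl⟩

    · exact ⟨(e, w), by simp [gens], (conc6 _).mpr rfl⟩

    · exact ⟨(e, s), by simp [gens], (conc7 _).mpr rfl⟩

    · exact ⟨(e, f), by simp [gens], (conc8 _).mpr rfl⟩

    · exact ⟨(e, t), by simp [gens], (conc9 _).mpr rfl⟩

set_option maxRecDepth 40000 in
set_option maxHeartbeats 1000000 in
lemma Lams_eq : Lams = ↑Λf := by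
  ext L
  simp only [Lams, Set.mem_setOf_eq]
  constructor
  · rintro ⟨hSyn, hN⟩
    have h3 : Ncount L = 3 := hN
    unfold Ncount at h3
    have hne : {M : Set (Rring × Rring) | (∃ g ∈ gens, M = RM g.1 g.2) ∧ ∀ q ∈ L, β q ∈ M}.Nonempty :=
      Set.nonempty_of_ncard_ne_zero (by omega)
    obtain ⟨M, ⟨g, hg, rfl⟩, hall⟩ := hne
    obtain ⟨a, b, c, hab, hac, hbc, rfl⟩ := Finset.card_eq_three.mp hSyn.1
    have hcover : a ∪ b ∪ c = Finset.univ := cover_of_syntheme hSyn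
    have hsub : ∀ q ∈ ({a, b, c} : Finset (Finset (Fin 6))), q ∈ Dset g.1 g.2 :=
      fun q hq => ⟨hSyn.2.1 q hq, hall q hq⟩
    clear h3 hall hSyn
    fin_cases hg
    · have ha' := (hD1 a).mp (hsub a (by simp))
      have hb' := (hD1 b).mp (hsub b (by simp))
      have hc' := (hD1 c).mp (hsub c (by simp))
      rcases tri1 a ha' b hb' c hc' hcover with h | h | h <;> rw [h] at hN ⊢ <;>
        first
          | exact Finset.mem_coe.mpr (by decide)
          | exact absurd hN (by first | exact ncB1 | exact ncB2 | exact ncB3 | exact ncB4 | exact ncB5 | exact ncB6 | exact ncB7 | exact ncB8 | exact ncB9)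
    · have ha' := (hD2 a).mp (hsub a (by simp))
      have hb' := (hD2 b).mp (hsub b (by simp))
      have hc' := (hD2 c).mp (hsub c (by simp))
      rcases tri2 a ha' b hb' c hc' hcover with h | h | h <;> rw [h] at hN ⊢ <;>
        first
          | exact Finset.mem_coe.mpr (by decide)
          | exact absurd hN (by first | exact ncB1 | exact ncB2 | exact ncB3 | exact ncB4 | exact ncB5 | exact ncB6 | exact ncB7 | exact ncB8 | exact ncB9)
    · have ha' := (hD3 a).mp (hsub a (by simp))
      have hb' := (hD3 b).mp (hsub b (by simp))
      have hc' := (hD3 c).mp (hsub c (by simp))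
      rcases tri3 a ha' b hb' c hc' hcover with h | h | h <;> rw [h] at hN ⊢ <;>
        first
          | exact Finset.mem_coe.mpr (by decide)
          | exact absurd hN (by first | exact ncB1 | exact ncB2 | exact ncB3 | exact ncB4 | exact ncB5 | exact ncB6 | exact ncB7 | exact ncB8 | exact ncB9)
    · have ha' := (hD4 a).mp (hsub a (by simp))
      have hb' := (hD4 b).mp (hsub b (by simp))
      have hc' := (hD4 c).mp (hsub c (by simp))
      rcases tri4 a ha' b hb' c hc' hcover with h | h | h <;> rw [h] at hN ⊢ <;>
        first
          | exact Finset.mem_coe.mpr (by decide)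
          | exact absurd hN (by first | exact ncB1 | exact ncB2 | exact ncB3 | exact ncB4 | exact ncB5 | exact ncB6 | exact ncB7 | exact ncB8 | exact ncB9)
    · have ha' := (hD5 a).mp (hsub a (by simp))
      have hb' := (hD5 b).mp (hsub b (by simp))
      have hc' := (hD5 c).mp (hsub c (by simp))
      rcases tri5 a ha' b hb' c hc' hcover with h | h | h <;> rw [h] at hN ⊢ <;>
        first
          | exact Finset.mem_coe.mpr (by decide)
          | exact absurd hN (by first | exact ncB1 | exact ncB2 | exact ncB3 | exact ncB4 | exact ncB5 | exact ncB6 | exact ncB7 | exact ncB8 | exact ncB9)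
    · have ha' := (hD6 a).mp (hsub a (by simp))
      have hb' := (hD6 b).mp (hsub b (by simp))
      have hc' := (hD6 c).mp (hsub c (by simp))
      rcases tri6 a ha' b hb' c hc' hcover with h | h | h <;> rw [h] at hN ⊢ <;>
        first
          | exact Finset.mem_coe.mpr (by decide)
          | exact absurd hN (by first | exact ncB1 | exact ncB2 | exact ncB3 | exact ncB4 | exact ncB5 | exact ncB6 | exact ncB7 | exact ncB8 | exact ncB9)
    · have ha' := (hD7 a).mp (hsub a (by simp))
      have hb' := (hD7 b).mp (hsub b (by simp))
      have hc' := (hD7 c).mp (hsub c (by simp))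
      rcases tri7 a ha' b hb' c hc' hcover with h | h | h <;> rw [h] at hN ⊢ <;>
        first
          | exact Finset.mem_coe.mpr (by decide)
          | exact absurd hN (by first | exact ncB1 | exact ncB2 | exact ncB3 | exact ncB4 | exact ncB5 | exact ncB6 | exact ncB7 | exact ncB8 | exact ncB9)
    · have ha' := (hD8 a).mp (hsub a (by simp))
      have hb' := (hD8 b).mp (hsub b (by simp))
      have hc' := (hD8 c).mp (hsub c (by simp))
      rcases tri8 a ha' b hb' c hc' hcover with h | h | h <;> rw [h] at hN ⊢ <;>
        first
          | exact Finset.mem_coe.mpr (by decide)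
          | exact absurd hN (by first | exact ncB1 | exact ncB2 | exact ncB3 | exact ncB4 | exact ncB5 | exact ncB6 | exact ncB7 | exact ncB8 | exact ncB9)
    · have ha' := (hD9 a).mp (hsub a (by simp))
      have hb' := (hD9 b).mp (hsub b (by simp))
      have hc' := (hD9 c).mp (hsub c (by simp))
      rcases tri9 a ha' b hb' c hc' hcover with h | h | h <;> rw [h] at hN ⊢ <;>
        first
          | exact Finset.mem_coe.mpr (by decide)
          | exact absurd hN (by first | exact ncB1 | exact ncB2 | exact ncB3 | exact ncB4 | exact ncB5 | exact ncB6 | exact ncB7 | exact ncB8 | exact ncB9)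
  · intro hL
    rw [Finset.mem_coe] at hL
    fin_cases hL
    · exact ⟨by decide, ncA1⟩
    · exact ⟨by decide, ncA2⟩
    · exact ⟨by decide, ncA3⟩
    · exact ⟨by decide, ncA4⟩
    · exact ⟨by decide, ncA5⟩
    · exact ⟨by decide, ncA6⟩
set_option maxRecDepth 40000 in
set_option maxHeartbeats 4000000 in
/-- Each distinguished submodule has a unique point of concurrence, distinct generators
have distinct points of concurrence (so P has exactly 9 points), Λ has exactly 6
synthemes, each syntheme of Λ contains exactly 3 points of P, each point of P lies in
exactly 2 synthemes of Λ, and two distinct synthemes of Λ share at most one point of P: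
(P, Λ) is a 3×3 grid, a generalized quadrangle GQ(2,1), inside the doily. -/
theorem grid_GQ_2_1_inside_doily :
    (∀ g ∈ gens, ∃! p, IsConc g p) ∧
    (∀ g ∈ gens, ∀ g' ∈ gens, ∀ p, IsConc g p → IsConc g' p → g = g') ∧
    Pset.ncard = 9 ∧ Lams.ncard = 6 ∧
    (∀ L ∈ Lams, (Pset ∩ ↑L).ncard = 3) ∧
    (∀ p ∈ Pset, {L ∈ Lams | p ∈ L}.ncard = 2) ∧
    (∀ L ∈ Lams, ∀ L' ∈ Lams, L ≠ L' → (Pset ∩ ↑L ∩ ↑L').Subsingleton) := by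
  refine ⟨?_, ?_, ?_, ?_, ?_, ?_, ?_⟩
  · intro g hg
    fin_cases hg
    exacts [⟨{2,5}, (conc1 _).mpr rfl, fun q hq => (conc1 q).mp hq⟩,
      ⟨{1,4}, (conc2 _).mpr rfl, fun q hq => (conc2 q).mp hq⟩,
      ⟨{0,3}, (conc3 _).mpr rfl, fun q hq => (conc3 q).mp hq⟩,
      ⟨{0,1}, (conc4 _).mpr rfl, fun q hq => (conc4 q).mp hq⟩,
      ⟨{2,3}, (conc5 _).mpr rfl, fun q hq => (conc5 q).mp hq⟩,
      ⟨{4,5}, (conc6 _).mpr rfl, fun q hq => (conc6 q).mp hq⟩,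
      ⟨{1,2}, (conc7 _).mpr rfl, fun q hq => (conc7 q).mp hq⟩,
      ⟨{0,5}, (conc8 _).mpr rfl, fun q hq => (conc8 q).mp hq⟩,
      ⟨{3,4}, (conc9 _).mpr rfl, fun q hq => (conc9 q).mp hq⟩]
  · intro g hg g' hg' p h h'
    fin_cases hg <;> fin_cases hg' <;>
      simp only [conc1, conc2, conc3, conc4, conc5, conc6, conc7, conc8, conc9] at h h' <;>
      subst h <;>
      first | rfl | exact absurd h' (by decide)
  · rw [Pset_eq, Set.ncard_coe_finset]; decide
  · rw [Lams_eq, Set.ncard_coe_finset]; decide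
  · intro L hL
    rw [Lams_eq, Finset.mem_coe] at hL
    rw [Pset_eq, ← Finset.coe_inter, Set.ncard_coe_finset]
    fin_cases hL <;> decide
  · intro p hp
    rw [Pset_eq, Finset.mem_coe] at hp
    have hset : {L ∈ Lams | p ∈ L} = ↑(Λf.filter (fun L => p ∈ L)) := by
      ext L
      simp [Lams_eq, Finset.mem_coe, Finset.mem_filter]
    rw [hset, Set.ncard_coe_finset]
    fin_cases hp <;> decide
  · intro L hL L' hL' hne a ha b hb
    rw [Lams_eq, Finset.mem_coe] at hL hL'
    rw [Pset_eq, ← Finset.coe_inter, ← Finset.coe_inter, Finset.mem_coe] at ha hb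
    refine Finset.card_le_one.mp ?_ a ha b hb
    fin_cases hL <;> fin_cases hL' <;> first | exact absurd rfl hne | decide
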